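/- If M is an additive submonoid of the nonnegative rationals such that 0 is not a limit point of M, then M is a BF-monoid, i.e., M is atomic and every element of M has only finitely many factorization lengths. -/
import Mathlib


open scoped BigOperators

/-- A Puiseux monoid: an additive submonoid of ℚ consisting of nonnegative elements. -/
def IsPuiseux (M : AddSubmonoid ℚ) : Prop := ∀ x ∈ M, (0:ℚ) ≤ x

/-- `a` is an atom of the submonoid `S`. -/
def IsAtomOf {α : Type*} [AddCommMonoid α] (S : AddSubmonoid α) (a : α) : Prop :=
  a ∈ S ∧ a ≠ 0 ∧ ∀ u v : α, u ∈ S → v ∈ S → a = u + v → u = 0 ∨ v = 0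

/-- `x` has a factorization of length `n` into atoms of `S`. -/
def IsLengthOf {α : Type*} [AddCommMonoid α] (S : AddSubmonoid α) (x : α) (n : ℕ) : Prop :=
  ∃ f : Fin n → α, (∀ i, IsAtomOf S (f i)) ∧ x = ∑ i, f i

/-- The set of lengths of `x` in `S`. -/
def lengthsOf {α : Type*} [AddCommMonoid α] (S : AddSubmonoid α) (x : α) : Set ℕ :=
  {n | IsLengthOf S x n}

/-- `S` is atomic: every nonzero element is a finite sum of atoms. -/
def AtomicM {α : Type*} [AddCommMonoid α] (S : AddSubmonoid α) : Prop :=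
  ∀ x ∈ S, x ≠ 0 → ∃ n : ℕ, IsLengthOf S x n

/-- The system of sets of lengths of `M`. -/
def systemOfLengths (M : AddSubmonoid ℚ) : Set (Set ℕ) :=
  {S | ∃ x ∈ M, lengthsOf M x = S}

/-- The elementary Puiseux monoid ⟨1/p : p prime⟩. -/
def elemPM : AddSubmonoid ℚ :=
  AddSubmonoid.closure {q : ℚ | ∃ p : ℕ, p.Prime ∧ q = 1 / p}

lemma isLengthOf_add {α : Type*} [AddCommMonoid α] (S : AddSubmonoid α) {u v : α} {a b : ℕ}
    (hu : IsLengthOf S u a) (hv : IsLengthOf S v b) : IsLengthOf S (u + v) (a + b) := by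
  obtain ⟨f, hf, hfu⟩ := hu
  obtain ⟨g, hg, hgv⟩ := hv
  refine ⟨Fin.append f g, ?_, ?_⟩
  · refine Fin.addCases (fun i => ?_) (fun i => ?_)
    · rw [Fin.append_left]; exact hf i
    · rw [Fin.append_right]; exact hg i
  · rw [Fin.sum_univ_add, hfu, hgv]
    congr 1
    · exact Finset.sum_congr rfl fun i _ => (Fin.append_left f g i).symm
    · exact Finset.sum_congr rfl fun i _ => (Fin.append_right f g i).symm

/-- If 0 is not a limit point of a Puiseux monoid `M`, then `M` is a BF-monoid. -/
theorem stmt0aux (M : AddSubmonoid ℚ) (hP : IsPuiseux M)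
    (h0 : ¬ AccPt (0:ℚ) (Filter.principal (M : Set ℚ))) :
    AtomicM M ∧ ∀ x ∈ M, (lengthsOf M x).Finite := by
  -- Extract ε > 0 such that every nonzero element of M is ≥ ε
  rw [accPt_iff_nhds] at h0
  push_neg at h0
  obtain ⟨U, hU, hU0⟩ := h0
  obtain ⟨ε, hε, hball⟩ := Metric.mem_nhds_iff.mp hU
  obtain ⟨δ, hδ0, hδε⟩ := exists_rat_btwn hε
  have hεℚ : (0:ℚ) < δ := by exact_mod_cast hδ0
  have key : ∀ y : ℚ, y ∈ M → y ≠ 0 → δ ≤ y := by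
    intro y hy hy0
    by_contra hlt
    push_neg at hlt
    have : y ∈ U := hball (by
      simp only [Metric.mem_ball, Rat.dist_eq, Rat.cast_zero, sub_zero]
      rw [abs_of_nonneg (by exact_mod_cast hP y hy)]
      exact lt_trans (by exact_mod_cast hlt) hδε)
    exact hy0 (hU0 y ⟨this, hy⟩)
  -- Atomicity by strong induction
  have atomic : ∀ n : ℕ, ∀ x : ℚ, x ∈ M → x ≠ 0 → x < n * δ → ∃ m, IsLengthOf M x m := by
    intro n
    induction n with
    | zero =>
      intro x hx hx0 hlt
      simp at hlt
      exact absurd (hP x hx) (not_le.mpr hlt)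
    | succ n ih =>
      intro x hx hx0 hlt
      by_cases hatom : IsAtomOf M x
      · exact ⟨1, fun _ => x, fun _ => hatom, by simp⟩
      · unfold IsAtomOf at hatom
        push_neg at hatom
        obtain ⟨u, v, hu, hv, hxuv, hu0, hv0⟩ := hatom hx hx0
        have hεu := key u hu hu0
        have hεv := key v hv hv0
        have hun : u < n * δ := by
          have : u = x - v := by linarith [hxuv]
          push_cast at hlt ⊢
          linarith
        have hvn : v < n * δ := by
          have : v = x - u := by linarith [hxuv]
          push_cast at hlt ⊢
          linarith
        obtain ⟨a, ha⟩ := ih u hu hu0 hun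
        obtain ⟨b, hb⟩ := ih v hv hv0 hvn
        exact ⟨a + b, hxuv ▸ isLengthOf_add M ha hb⟩
  constructor
  · intro x hx hx0
    obtain ⟨n, hn⟩ := exists_nat_gt (x / δ)
    exact atomic n x hx hx0 (by rwa [div_lt_iff₀ hεℚ] at hn)
  · intro x hx
    apply Set.Finite.subset (Set.finite_Iic ⌈x / δ⌉₊)
    intro n hn
    obtain ⟨f, hf, hfx⟩ := hn
    have hsum : (n : ℚ) * δ ≤ x := by
      rw [hfx]
      calc (n : ℚ) * δ = Finset.univ.card • δ := by simp [mul_comm]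
        _ ≤ ∑ i : Fin n, f i :=
          Finset.card_nsmul_le_sum _ _ _ fun i _ => key (f i) (hf i).1 (hf i).2.1
    have : (n : ℚ) ≤ x / δ := (le_div_iff₀ hεℚ).mpr hsum
    exact_mod_cast Nat.cast_le.mp (this.trans (Nat.le_ceil _))

/-- If 0 is not a limit point of a Puiseux monoid `M`, then `M` is a BF-monoid. -/
theorem stmt0 (M : AddSubmonoid ℚ) (hP : IsPuiseux M)
    (h0 : ¬ AccPt (0:ℚ) (Filter.principal (M : Set ℚ))) :
    AtomicM M ∧ ∀ x ∈ M, (lengthsOf M x).Finite := by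
  exact stmt0aux M hP h0
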